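/- Let H be a complex Hilbert space, (φ̃ₙ), (Ψ̃ₙ) sequences in H, (αₙ) reals with 0 = α₀ < α₁ < α₂ < …, α₀! = 1, α_k! = α₁⋯α_k, and let ρ ∈ (0, ∞]. Assume: (i) for every |z| < ρ the series N(|z|) = (Σ_k |z|^{2k}/(α_k!)²)^{−1/2}, φ(z) = N(|z|) Σ_k (z^k/α_k!) φ̃_k and Ψ(z) = N(|z|) Σ_k (z^k/α_k!) Ψ̃_k converge; (ii) there is a subspace G ⊆ H such that for all f, g ∈ G, Σ_{n≥0} ⟨f, φ̃ₙ⟩⟨Ψ̃ₙ, g⟩ = ⟨f, g⟩; (iii) there is a positive measure λ on [0, ρ) with ∫₀^ρ r^{2k} dλ(r) = (α_k!)²/(2π) for all k ≥ 0. Then, writing z = r e^{iθ} and dν(z, z̄) = N(r)^{−2} dλ(r) dθ, for all f, g ∈ G: ∫_{C_ρ(0)} ⟨f, Ψ(z)⟩⟨φ(z), g⟩ dν(z, z̄) = ⟨f, g⟩ and ∫_{C_ρ(0)} ⟨f, φ(z)⟩⟨Ψ(z), g⟩ dν(z, z̄) = ⟨f, g⟩. -/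

import Mathlib

open Filter MeasureTheory
open scoped ENNReal InnerProductSpace

/-- The generalized factorial `α_k! = α₁ α₂ ⋯ α_k`, with `α₀! = 1`. -/
noncomputable def afact (α : ℕ → ℝ) : ℕ → ℝ
  | 0 => 1
  | n + 1 => afact α n * α (n + 1)

lemma afact_pos {α : ℕ → ℝ} (hα0 : α 0 = 0) (hαmono : StrictMono α) (k : ℕ) :
    0 < afact α k := by
  induction k with
  | zero => norm_num [afact]
  | succ n ih =>
    have : 0 < α (n+1) := hα0 ▸ hαmono (Nat.succ_pos n)
    exact mul_pos ih this

lemma intExpIco (n : ℤ) :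
    (∫ θ in Set.Ico (0:ℝ) (2*Real.pi), Complex.exp ((n:ℂ) * θ * Complex.I))
      = if n = 0 then (2*Real.pi : ℂ) else 0 := by
  have h2π : (0:ℝ) ≤ 2*Real.pi := by positivity
  have key : (∫ θ in Set.Ico (0:ℝ) (2*Real.pi), Complex.exp ((n:ℂ) * θ * Complex.I))
      = ∫ θ in (0:ℝ)..(2*Real.pi), Complex.exp ((n:ℂ) * θ * Complex.I) := by
    rw [← integral_Icc_eq_integral_Ico, integral_Icc_eq_integral_Ioc,
      intervalIntegral.integral_of_le h2π]
  rw [key]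
  rcases eq_or_ne n 0 with hn | hn
  · simp [hn]
  · simp only [if_neg hn]
    have hc : ((n:ℂ) * Complex.I) ≠ 0 := by
      simp [Complex.ext_iff, hn]
    have h1 : ∀ θ : ℝ, (n:ℂ) * θ * Complex.I = ((n:ℂ) * Complex.I) * θ := by
      intro θ; ring
    simp only [h1]
    rw [integral_exp_mul_complex hc]
    have h2 : Complex.exp ((n:ℂ) * Complex.I * (2*Real.pi)) = 1 := by
      rw [show ((n:ℂ) * Complex.I * (2*Real.pi)) = (n:ℂ) * (2*Real.pi*Complex.I) by ring]
      exact Complex.exp_int_mul_two_pi_mul_I n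
    simp [h2]

set_option maxHeartbeats 1000000 in
lemma inner_lemma {H : Type*} [NormedAddCommGroup H] [InnerProductSpace ℂ H]
    (Pt Qt : ℕ → H) (af : ℕ → ℝ) (haf : ∀ k, 0 < af k)
    (r Nr : ℝ) (hr0 : 0 ≤ r) (hN : 0 < Nr)
    (Pzv Qzv : ℝ → H) (f g : H)
    (hQ : ∀ θ : ℝ, HasSum
      (fun k : ℕ => ((Nr:ℂ) * ((r:ℂ) * Complex.exp (θ * Complex.I)) ^ k / (af k : ℂ)) • Qt k)
      (Qzv θ))
    (hP : ∀ θ : ℝ, HasSum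
      (fun k : ℕ => ((Nr:ℂ) * ((r:ℂ) * Complex.exp (θ * Complex.I)) ^ k / (af k : ℂ)) • Pt k)
      (Pzv θ)) :
    (∫ θ in Set.Ico (0 : ℝ) (2 * Real.pi),
        ⟪f, Qzv θ⟫_ℂ * ⟪Pzv θ, g⟫_ℂ * (((Nr : ℂ)) ^ 2)⁻¹)
      = ∑' k : ℕ, ((r ^ (2*k) : ℝ) : ℂ) *
          ((2*Real.pi) * (⟪f, Qt k⟫_ℂ * ⟪Pt k, g⟫_ℂ) / ((af k : ℂ)) ^ 2) := by
  have h2π : (0:ℝ) ≤ 2*Real.pi := by positivity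
  have hNne : ((Nr:ℂ)) ≠ 0 := by exact_mod_cast hN.ne'
  set Qf : ℕ → ℂ := fun k => ⟪f, Qt k⟫_ℂ with hQf
  set Pg : ℕ → ℂ := fun l => ⟪Pt l, g⟫_ℂ with hPg
  set Z : ℝ → ℂ := fun θ => (r : ℂ) * Complex.exp (θ * Complex.I) with hZ
  set c : ℝ → ℕ → ℂ := fun θ k => (Nr:ℂ) * (Z θ)^k / (af k : ℂ) with hc
  have hZnorm : ∀ θ : ℝ, ‖Z θ‖ = r := by
    intro θ
    simp [hZ, map_mul, Complex.norm_exp, abs_of_nonneg hr0]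
  have haQ : ∀ θ : ℝ, HasSum (fun k => c θ k * Qf k) ⟪f, Qzv θ⟫_ℂ := by
    intro θ
    have h := (hQ θ).mapL (innerSL ℂ f)
    simpa [hc, hZ, innerSL_apply_apply, inner_smul_right] using h
  have haP : ∀ θ : ℝ, HasSum (fun l => (starRingEnd ℂ) (c θ l) * Pg l)
      ⟪Pzv θ, g⟫_ℂ := by
    intro θ
    have h := (hP θ).mapL (innerSL ℂ g)
    have h2 := Complex.hasSum_conj'.mpr h
    simpa [hc, hZ, innerSL_apply_apply, inner_smul_right, map_mul,
      inner_conj_symm] using h2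
  have hnormQ : ∀ θ : ℝ, Summable (fun k => ‖c θ k * Qf k‖) :=
    fun θ => (haQ θ).summable.norm
  have hnormP : ∀ θ : ℝ, Summable (fun l => ‖(starRingEnd ℂ) (c θ l) * Pg l‖) :=
    fun θ => (haP θ).summable.norm
  clear_value Qf Pg Z c
  -- the explicit double-indexed terms
  set E : ℕ × ℕ → ℝ → ℂ := fun p θ =>
    ((r:ℂ)^(p.1+p.2) / ((af p.1 : ℂ) * (af p.2 : ℂ))) * (Qf p.1 * Pg p.2) *
      Complex.exp (((p.1:ℂ) - (p.2:ℂ)) * θ * Complex.I) with hE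
  have hconjZ : ∀ θ : ℝ, (starRingEnd ℂ) (Z θ) = (r:ℂ) * Complex.exp (-(θ * Complex.I)) := by
    intro θ
    rw [hZ]
    simp only [map_mul, Complex.conj_ofReal, ← Complex.exp_conj]
    norm_num
  have hzz : ∀ (θ : ℝ) (k l : ℕ), (Z θ)^k * ((starRingEnd ℂ) (Z θ))^l
      = (r:ℂ)^(k+l) * Complex.exp (((k:ℂ) - (l:ℂ)) * θ * Complex.I) := by
    intro θ k l
    rw [hconjZ, hZ]
    simp only [mul_pow, ← Complex.exp_nat_mul, pow_add]
    rw [show ((r:ℂ)^k * Complex.exp ((k:ℂ)*(θ*Complex.I)) * ((r:ℂ)^l *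
        Complex.exp ((l:ℂ) * -(θ*Complex.I))))
      = (r:ℂ)^k * (r:ℂ)^l * (Complex.exp ((k:ℂ)*(θ*Complex.I)) *
        Complex.exp ((l:ℂ) * -(θ*Complex.I))) from by ring, ← Complex.exp_add]
    congr 1
    ring
  have hEeq : ∀ (θ : ℝ) (p : ℕ × ℕ),
      (c θ p.1 * Qf p.1) * ((starRingEnd ℂ) (c θ p.2) * Pg p.2) * (((Nr:ℂ))^2)⁻¹
        = E p θ := by
    intro θ p
    obtain ⟨k, l⟩ := p
    have hak : (af k : ℂ) ≠ 0 := by exact_mod_cast (haf k).ne'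
    have hal : (af l : ℂ) ≠ 0 := by exact_mod_cast (haf l).ne'
    have step1 : (c θ k * Qf k) * ((starRingEnd ℂ) (c θ l) * Pg l) * (((Nr:ℂ))^2)⁻¹
        = ((Z θ)^k * ((starRingEnd ℂ) (Z θ))^l) * (Qf k * Pg l) *
          ((Nr:ℂ)^2 * (((Nr:ℂ))^2)⁻¹) / ((af k : ℂ) * (af l : ℂ)) := by
      simp only [hc, map_mul, map_div₀, map_pow, Complex.conj_ofReal]
      ring
    rw [step1, hzz, mul_inv_cancel₀ (pow_ne_zero 2 hNne), hE]
    field_simp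
  have hpt : ∀ θ : ℝ, ⟪f, Qzv θ⟫_ℂ * ⟪Pzv θ, g⟫_ℂ * (((Nr:ℂ))^2)⁻¹
      = ∑' p : ℕ × ℕ, E p θ := by
    intro θ
    rw [← (haQ θ).tsum_eq, ← (haP θ).tsum_eq,
      tsum_mul_tsum_of_summable_norm (hnormQ θ) (hnormP θ), ← tsum_mul_right]
    exact tsum_congr (hEeq θ)
  -- integrability and summability for the swap
  set A : ℕ → ℝ := fun k => r^k / af k * ‖Qf k‖ with hA
  set B : ℕ → ℝ := fun l => r^l / af l * ‖Pg l‖ with hB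
  have hEnorm : ∀ (p : ℕ × ℕ) (θ : ℝ), ‖E p θ‖ = A p.1 * B p.2 := by
    intro p θ
    have h1 : ‖Complex.exp (((p.1:ℂ) - (p.2:ℂ)) * θ * Complex.I)‖ = 1 := by
      rw [Complex.norm_exp]
      have h0 : ((((p.1:ℂ) - (p.2:ℂ)) * θ) * Complex.I).re = 0 := by
        rw [Complex.mul_I_re]
        simp
      rw [show (((p.1:ℂ) - (p.2:ℂ)) * θ * Complex.I)
        = ((((p.1:ℂ) - (p.2:ℂ)) * θ) * Complex.I) from by ring, h0, Real.exp_zero]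
    rw [hE]
    simp only [norm_mul, norm_div, h1, mul_one, Complex.norm_real, Complex.norm_natCast,
      norm_pow, Real.norm_eq_abs, abs_of_nonneg hr0, abs_of_pos (haf p.1),
      abs_of_pos (haf p.2)]
    rw [hA, hB, pow_add]
    have h2 : |r| = r := abs_of_nonneg hr0
    simp only [Complex.norm_real, Real.norm_eq_abs, h2]
    field_simp
  have hAsum : Summable A := by
    have hc0 : ∀ k : ℕ, ‖c 0 k * Qf k‖ = Nr * A k := by
      intro k
      rw [hc, hA]
      simp only [norm_mul, norm_div, Complex.norm_real, Real.norm_eq_abs, norm_pow,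
        abs_of_pos hN, abs_of_pos (haf k),
        hZnorm 0]
      ring
    have h := (hnormQ 0).mul_left (Nr⁻¹)
    refine h.congr fun k => ?_
    rw [hc0 k, ← mul_assoc, inv_mul_cancel₀ hN.ne', one_mul]
  have hBsum : Summable B := by
    have hc0 : ∀ l : ℕ, ‖(starRingEnd ℂ) (c 0 l) * Pg l‖ = Nr * B l := by
      intro l
      rw [hc, hB]
      simp only [norm_mul, norm_div, RCLike.norm_conj, Complex.norm_real,
        Real.norm_eq_abs, norm_pow,
        abs_of_pos hN, abs_of_pos (haf l), hZnorm 0]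
      ring
    have h := (hnormP 0).mul_left (Nr⁻¹)
    refine h.congr fun l => ?_
    rw [hc0 l, ← mul_assoc, inv_mul_cancel₀ hN.ne', one_mul]
  have hAnn : ∀ k, 0 ≤ A k := by
    intro k
    rw [hA]
    have := (haf k).le
    positivity
  have hBnn : ∀ l, 0 ≤ B l := by
    intro l
    rw [hB]
    have := (haf l).le
    positivity
  have hEcont : ∀ p : ℕ × ℕ, Continuous (E p) := by
    intro p
    rw [hE]
    fun_prop
  have hEint : ∀ p : ℕ × ℕ, Integrable (E p)
      (volume.restrict (Set.Ico (0:ℝ) (2*Real.pi))) := by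
    intro p
    exact ((hEcont p).integrableOn_Icc).mono_set Set.Ico_subset_Icc_self
  have hEsumInt : Summable (fun p : ℕ × ℕ =>
      ∫ θ in Set.Ico (0:ℝ) (2*Real.pi), ‖E p θ‖) := by
    have h : ∀ p : ℕ × ℕ, (∫ θ in Set.Ico (0:ℝ) (2*Real.pi), ‖E p θ‖)
        = (2*Real.pi) * (A p.1 * B p.2) := by
      intro p
      simp only [hEnorm p]
      rw [setIntegral_const, Real.volume_real_Ico, sub_zero, max_eq_left h2π,
        smul_eq_mul]
    simp only [h]
    exact ((hAsum.mul_of_nonneg hBsum hAnn hBnn)).mul_left _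
  have hswapθ : (∫ θ in Set.Ico (0:ℝ) (2*Real.pi), ∑' p : ℕ × ℕ, E p θ)
      = ∑' p : ℕ × ℕ, ∫ θ in Set.Ico (0:ℝ) (2*Real.pi), E p θ :=
    (integral_tsum_of_summable_integral_norm hEint hEsumInt).symm
  -- the individual θ-integrals
  have hEval : ∀ p : ℕ × ℕ, (∫ θ in Set.Ico (0:ℝ) (2*Real.pi), E p θ)
      = if p.1 = p.2 then ((r ^ (2*p.1) : ℝ) : ℂ) *
          ((2*Real.pi) * (Qf p.1 * Pg p.1) / ((af p.1 : ℂ)) ^ 2) else 0 := by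
    intro p
    obtain ⟨k, l⟩ := p
    have hak : (af k : ℂ) ≠ 0 := by exact_mod_cast (haf k).ne'
    have harg : ∀ θ : ℝ, ((((k:ℤ) - (l:ℤ) : ℤ)):ℂ) * θ * Complex.I
        = ((k:ℂ) - (l:ℂ)) * θ * Complex.I := by
      intro θ
      push_cast
      ring
    have hexpint := intExpIco ((k:ℤ) - (l:ℤ))
    simp only [harg] at hexpint
    rw [hE]
    simp only
    rw [integral_const_mul, hexpint]
    rcases eq_or_ne k l with h | h
    · subst h
      simp only [sub_self, if_pos rfl]
      push_cast
      rw [two_mul]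
      field_simp
      ring
    · have h2 : ¬ ((k:ℤ) - (l:ℤ) = 0) := by
        intro hcon
        exact h (by exact_mod_cast sub_eq_zero.mp hcon)
      simp [if_neg h2, if_neg h]
  calc (∫ θ in Set.Ico (0 : ℝ) (2 * Real.pi),
        ⟪f, Qzv θ⟫_ℂ * ⟪Pzv θ, g⟫_ℂ * (((Nr : ℂ)) ^ 2)⁻¹)
      = ∫ θ in Set.Ico (0 : ℝ) (2 * Real.pi), ∑' p : ℕ × ℕ, E p θ := by
        refine integral_congr_ae (Eventually.of_forall fun θ => ?_)
        exact hpt θ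
    _ = ∑' p : ℕ × ℕ, ∫ θ in Set.Ico (0:ℝ) (2*Real.pi), E p θ := hswapθ
    _ = ∑' p : ℕ × ℕ, (if p.1 = p.2 then ((r ^ (2*p.1) : ℝ) : ℂ) *
          ((2*Real.pi) * (Qf p.1 * Pg p.1) / ((af p.1 : ℂ)) ^ 2) else 0) :=
        tsum_congr hEval
    _ = ∑' k : ℕ, ((r ^ (2*k) : ℝ) : ℂ) *
          ((2*Real.pi) * (Qf k * Pg k) / ((af k : ℂ)) ^ 2) := by
        rw [← Function.Injective.tsum_eq (g := fun k : ℕ => ((k, k) : ℕ × ℕ))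
          (fun a b hab => congrArg Prod.fst hab)
          (f := fun p : ℕ × ℕ => if p.1 = p.2 then ((r ^ (2*p.1) : ℝ) : ℂ) *
            ((2*Real.pi) * (Qf p.1 * Pg p.1) / ((af p.1 : ℂ)) ^ 2) else 0) ?_]
        · simp
        · intro p hp
          rcases eq_or_ne p.1 p.2 with h | h
          · exact ⟨p.1, Prod.ext rfl h⟩
          · simp [h] at hp
    _ = ∑' k : ℕ, ((r ^ (2*k) : ℝ) : ℂ) *
          ((2*Real.pi) * (⟪f, Qt k⟫_ℂ * ⟪Pt k, g⟫_ℂ) / ((af k : ℂ)) ^ 2) := by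
        simp only [hQf, hPg]

set_option maxHeartbeats 2000000 in
lemma key {H : Type*} [NormedAddCommGroup H] [InnerProductSpace ℂ H]
    [CompleteSpace H]
    (Pt Qt : ℕ → H) (α : ℕ → ℝ)
    (hα0 : α 0 = 0) (hαmono : StrictMono α)
    (ρ : ℝ≥0∞)
    (Nval : ℝ → ℝ)
    (hNval : ∀ r : ℝ, Nval r = (Real.sqrt (∑' k : ℕ, r ^ (2 * k) / (afact α k) ^ 2))⁻¹)
    (Pz Qz : ℂ → H)
    (hsum : ∀ z : ℂ, ENNReal.ofReal ‖z‖ < ρ →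
      Summable (fun k : ℕ => ‖z‖ ^ (2 * k) / (afact α k) ^ 2))
    (hPz : ∀ z : ℂ, ENNReal.ofReal ‖z‖ < ρ →
      HasSum (fun k : ℕ => ((Nval ‖z‖ : ℂ) * z ^ k / (afact α k : ℂ)) • Pt k) (Pz z))
    (hQz : ∀ z : ℂ, ENNReal.ofReal ‖z‖ < ρ →
      HasSum (fun k : ℕ => ((Nval ‖z‖ : ℂ) * z ^ k / (afact α k : ℂ)) • Qt k) (Qz z))
    (lam : Measure ℝ)
    (hlamsupp : ∀ᵐ r ∂lam, 0 ≤ r ∧ ENNReal.ofReal r < ρ)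
    (hmoment : ∀ k : ℕ, ∫ r : ℝ, r ^ (2 * k) ∂lam = (afact α k) ^ 2 / (2 * Real.pi))
    (f g : H) (S : ℂ)
    (hS : HasSum (fun n : ℕ => ⟪f, Qt n⟫_ℂ * ⟪Pt n, g⟫_ℂ) S) :
    (∫ r : ℝ, (∫ θ in Set.Ico (0 : ℝ) (2 * Real.pi),
        ⟪f, Qz ((r : ℂ) * Complex.exp (θ * Complex.I))⟫_ℂ *
        ⟪Pz ((r : ℂ) * Complex.exp (θ * Complex.I)), g⟫_ℂ *
        (((Nval r : ℂ)) ^ 2)⁻¹) ∂lam) = S := by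
  have hπ : (0:ℝ) < Real.pi := Real.pi_pos
  have hafact : ∀ k, (0:ℝ) < afact α k := afact_pos hα0 hαmono
  set Qf : ℕ → ℂ := fun k => ⟪f, Qt k⟫_ℂ with hQf
  set Pg : ℕ → ℂ := fun l => ⟪Pt l, g⟫_ℂ with hPg
  set w : ℕ → ℂ := fun k => Qf k * Pg k with hw
  -- the diagonal coefficient as a function of r
  set u : ℕ → ℝ → ℂ := fun k r => ((r ^ (2*k) : ℝ) : ℂ) * ((2*Real.pi) * w k / ((afact α k : ℂ))^2) with hu
  -- Step 1 : inner integral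
  have inner_eq : ∀ r : ℝ, 0 ≤ r → ENNReal.ofReal r < ρ →
      (∫ θ in Set.Ico (0 : ℝ) (2 * Real.pi),
        ⟪f, Qz ((r : ℂ) * Complex.exp (θ * Complex.I))⟫_ℂ *
        ⟪Pz ((r : ℂ) * Complex.exp (θ * Complex.I)), g⟫_ℂ *
        (((Nval r : ℂ)) ^ 2)⁻¹) = ∑' k : ℕ, u k r := by
    intro r hr0 hrρ
    have hznorm : ∀ θ : ℝ, ‖(r : ℂ) * Complex.exp (θ * Complex.I)‖ = r := by
      intro θ
      simp [map_mul, Complex.norm_exp,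
        abs_of_nonneg hr0]
    have hrr : ENNReal.ofReal ‖(r:ℂ)‖ < ρ := by
      rwa [Complex.norm_real, Real.norm_eq_abs, abs_of_nonneg hr0]
    have hT : Summable (fun k : ℕ => r ^ (2*k) / (afact α k)^2) := by
      have h := hsum (r:ℂ) hrr
      refine h.congr fun k => ?_
      rw [Complex.norm_real, Real.norm_eq_abs, pow_mul, pow_mul, sq_abs]
    have hT1 : (1:ℝ) ≤ ∑' k : ℕ, r^(2*k)/(afact α k)^2 := by
      have h0 : r^(2*0)/(afact α 0)^2 = 1 := by norm_num [afact]
      calc (1:ℝ) = r^(2*0)/(afact α 0)^2 := h0.symm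
        _ ≤ ∑' k : ℕ, r^(2*k)/(afact α k)^2 := by
            refine Summable.le_tsum hT 0 fun j _ => ?_
            have h1 : (0:ℝ) ≤ r^(2*j) := by rw [pow_mul]; positivity
            have h2 : (0:ℝ) < (afact α j)^2 := pow_pos (hafact j) 2
            positivity
    have hNpos : 0 < Nval r := by
      rw [hNval]
      have h1 : (1:ℝ) ≤ Real.sqrt (∑' k : ℕ, r^(2*k)/(afact α k)^2) := by
        rw [show (1:ℝ) = Real.sqrt 1 from Real.sqrt_one.symm]
        exact Real.sqrt_le_sqrt hT1
      exact inv_pos.mpr (lt_of_lt_of_le zero_lt_one h1)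
    have hzρ : ∀ θ : ℝ, ENNReal.ofReal ‖(r : ℂ) * Complex.exp (θ * Complex.I)‖ < ρ :=
      fun θ => by rw [hznorm]; exact hrρ
    have hQ : ∀ θ : ℝ, HasSum
        (fun k : ℕ => ((Nval r : ℂ) * ((r:ℂ) * Complex.exp (θ * Complex.I)) ^ k /
          (afact α k : ℂ)) • Qt k) (Qz ((r:ℂ) * Complex.exp (θ * Complex.I))) := by
      intro θ
      have h := hQz _ (hzρ θ)
      rwa [hznorm θ] at h
    have hP : ∀ θ : ℝ, HasSum
        (fun k : ℕ => ((Nval r : ℂ) * ((r:ℂ) * Complex.exp (θ * Complex.I)) ^ k /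
          (afact α k : ℂ)) • Pt k) (Pz ((r:ℂ) * Complex.exp (θ * Complex.I))) := by
      intro θ
      have h := hPz _ (hzρ θ)
      rwa [hznorm θ] at h
    exact inner_lemma Pt Qt (afact α) hafact r (Nval r) hr0 hNpos
      (fun θ => Pz ((r:ℂ) * Complex.exp (θ * Complex.I)))
      (fun θ => Qz ((r:ℂ) * Complex.exp (θ * Complex.I))) f g hQ hP
  -- Step 2 : outer integral
  have houter : (∫ r : ℝ, (∫ θ in Set.Ico (0 : ℝ) (2 * Real.pi),
        ⟪f, Qz ((r : ℂ) * Complex.exp (θ * Complex.I))⟫_ℂ *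
        ⟪Pz ((r : ℂ) * Complex.exp (θ * Complex.I)), g⟫_ℂ *
        (((Nval r : ℂ)) ^ 2)⁻¹) ∂lam) = ∫ r : ℝ, (∑' k : ℕ, u k r) ∂lam := by
    refine integral_congr_ae (hlamsupp.mono ?_)
    intro r hr
    exact inner_eq r hr.1 hr.2
  rw [houter]
  -- integrability of the moments
  have hint : ∀ k : ℕ, Integrable (fun r : ℝ => r ^ (2*k)) lam := by
    intro k
    by_contra h
    have := hmoment k
    rw [integral_undef h] at this
    have h2 : (0:ℝ) < (afact α k)^2 / (2*Real.pi) :=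
      div_pos (pow_pos (hafact k) 2) (by positivity)
    rw [← this] at h2; exact lt_irrefl 0 h2
  have hintu : ∀ k : ℕ, Integrable (u k) lam := by
    intro k
    exact ((hint k).ofReal (𝕜 := ℂ)).mul_const _
  -- swap sum and integral
  have hswap : ∑' k : ℕ, (∫ r : ℝ, u k r ∂lam) = ∫ r : ℝ, (∑' k : ℕ, u k r) ∂lam := by
    refine integral_tsum_of_summable_integral_norm hintu ?_
    have hnorm : ∀ k : ℕ, (∫ r : ℝ, ‖u k r‖ ∂lam) = ‖w k‖ := by
      intro k
      have habs : ∀ r : ℝ, ‖u k r‖ = r ^ (2*k) * (2*Real.pi * ‖w k‖ / (afact α k)^2) := by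
        intro r
        have h1 : |r ^ (2*k)| = r ^ (2*k) := by
          rw [abs_pow, pow_mul, pow_mul, sq_abs]
        simp only [hu, norm_mul, norm_div, norm_pow, Complex.norm_real,
          Real.norm_eq_abs, h1, abs_of_pos hπ, abs_of_pos (hafact k), Complex.norm_ofNat]
        rw [show |r| ^ (2*k) = r ^ (2*k) from by rw [pow_mul, sq_abs, ← pow_mul]]
      simp only [habs]
      rw [integral_mul_const, hmoment k]
      field_simp [hπ.ne', (hafact k).ne']
    simp only [hnorm]
    exact hS.summable.norm
  rw [← hswap]
  -- compute each integral
  have hval : ∀ k : ℕ, (∫ r : ℝ, u k r ∂lam) = w k := by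
    intro k
    simp only [hu]
    rw [integral_mul_const,
      show (∫ a : ℝ, ((a ^ (2*k) : ℝ) : ℂ) ∂lam) = ((∫ a : ℝ, a ^ (2*k) ∂lam : ℝ) : ℂ)
        from integral_ofReal, hmoment k]
    have h1 : (afact α k : ℂ) ≠ 0 := by
      exact_mod_cast (hafact k).ne'
    have h2 : (Real.pi : ℂ) ≠ 0 := by exact_mod_cast hπ.ne'
    push_cast
    field_simp
  simp only [hval]
  exact hS.tsum_eq

/-- resolution of the identity for the bi-coherent states
`φ(z), Ψ(z)` on the disc `C_ρ(0)`, written in polar coordinates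
`z = r e^{iθ}`, `dν(z,z̄) = N(r)^{−2} dλ(r) dθ`. -/
theorem stmt3 (H : Type*) [NormedAddCommGroup H] [InnerProductSpace ℂ H]
    [CompleteSpace H]
    (φt Ψt : ℕ → H) (α : ℕ → ℝ)
    (hα0 : α 0 = 0) (hαmono : StrictMono α)
    (ρ : ℝ≥0∞) (hρpos : 0 < ρ)
    (Nval : ℝ → ℝ)
    (hNval : ∀ r : ℝ, Nval r = (Real.sqrt (∑' k : ℕ, r ^ (2 * k) / (afact α k) ^ 2))⁻¹)
    (φz Ψz : ℂ → H)
    -- (i) : the defining series of `N(|z|)`, `φ(z)` and `Ψ(z)` all converge for `|z| < ρ`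
    (hsum : ∀ z : ℂ, ENNReal.ofReal ‖z‖ < ρ →
      Summable (fun k : ℕ => ‖z‖ ^ (2 * k) / (afact α k) ^ 2))
    (hφz : ∀ z : ℂ, ENNReal.ofReal ‖z‖ < ρ →
      HasSum (fun k : ℕ => ((Nval ‖z‖ : ℂ) * z ^ k / (afact α k : ℂ)) • φt k) (φz z))
    (hΨz : ∀ z : ℂ, ENNReal.ofReal ‖z‖ < ρ →
      HasSum (fun k : ℕ => ((Nval ‖z‖ : ℂ) * z ^ k / (afact α k : ℂ)) • Ψt k) (Ψz z))
    -- (ii) : `(F_φ̃, F_Ψ̃)` are `G`-quasi bases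
    (G : Submodule ℂ H)
    (hG : ∀ f ∈ G, ∀ g ∈ G,
      HasSum (fun n : ℕ => ⟪f, φt n⟫_ℂ * ⟪Ψt n, g⟫_ℂ) ⟪f, g⟫_ℂ)
    -- (iii) : the moment condition for the measure `λ` on `[0, ρ)`
    (lam : Measure ℝ)
    (hlamsupp : ∀ᵐ r ∂lam, 0 ≤ r ∧ ENNReal.ofReal r < ρ)
    (hmoment : ∀ k : ℕ, ∫ r : ℝ, r ^ (2 * k) ∂lam = (afact α k) ^ 2 / (2 * Real.pi)) :
    ∀ f ∈ G, ∀ g ∈ G,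
      (∫ r : ℝ, (∫ θ in Set.Ico (0 : ℝ) (2 * Real.pi),
          ⟪f, Ψz ((r : ℂ) * Complex.exp (θ * Complex.I))⟫_ℂ *
          ⟪φz ((r : ℂ) * Complex.exp (θ * Complex.I)), g⟫_ℂ *
          (((Nval r : ℂ)) ^ 2)⁻¹) ∂lam) = ⟪f, g⟫_ℂ ∧
      (∫ r : ℝ, (∫ θ in Set.Ico (0 : ℝ) (2 * Real.pi),
          ⟪f, φz ((r : ℂ) * Complex.exp (θ * Complex.I))⟫_ℂ *
          ⟪Ψz ((r : ℂ) * Complex.exp (θ * Complex.I)), g⟫_ℂ *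
          (((Nval r : ℂ)) ^ 2)⁻¹) ∂lam) = ⟪f, g⟫_ℂ := by
  intro f hf g hg
  constructor
  · -- first identity : Q = Ψ, P = φ
    have hS : HasSum (fun n : ℕ => ⟪f, Ψt n⟫_ℂ * ⟪φt n, g⟫_ℂ) ⟪f, g⟫_ℂ := by
      have h := Complex.hasSum_conj'.mpr (hG g hg f hf)
      simp only [map_mul, inner_conj_symm] at h
      have h2 : (fun n : ℕ => ⟪φt n, g⟫_ℂ * ⟪f, Ψt n⟫_ℂ)
          = fun n : ℕ => ⟪f, Ψt n⟫_ℂ * ⟪φt n, g⟫_ℂ := funext fun n => mul_comm _ _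
      rwa [h2] at h
    exact key φt Ψt α hα0 hαmono ρ Nval hNval φz Ψz hsum hφz hΨz lam hlamsupp hmoment
      f g _ hS
  · have hS : HasSum (fun n : ℕ => ⟪f, φt n⟫_ℂ * ⟪Ψt n, g⟫_ℂ) ⟪f, g⟫_ℂ := hG f hf g hg
    exact key Ψt φt α hα0 hαmono ρ Nval hNval Ψz φz hsum hΨz hφz lam hlamsupp hmoment
      f g _ hS
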